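/- Every nonempty pattern V over {*, *⁻¹} has a unique decomposition V = V_I V_II such that (i) if V_I is nonempty then the last letter of V_I equals the first letter of V_II, and (ii) V_II equals (* *⁻¹)^l *^r or (*⁻¹ *)^l *⁻ʳ for some l ≥ 0 and r ∈ {0,1} with (l, r) ≠ (0, 0). -/

import Mathlib

namespace PatternDecomp

/-- alternating word of length `n` starting with `s` -/
def G : Bool → ℕ → List Bool
  | _, 0 => []
  | s, n+1 => s :: G (!s) n

lemma G_succ (s : Bool) (n : ℕ) : G s (n+1) = s :: G (!s) n := rfl

lemma G_length (s : Bool) (n : ℕ) : (G s n).length = n := by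
  induction n generalizing s with
  | zero => rfl
  | succ n ih => simp [G_succ, ih]

lemma G_chain (s : Bool) (n : ℕ) : List.Chain' (fun x y => y = !x) (G s n) := by
  induction n generalizing s with
  | zero => exact List.isChain_nil
  | succ n ih =>
    cases n with
    | zero => exact List.isChain_singleton s
    | succ m =>
      rw [G_succ, G_succ]
      exact List.isChain_cons_cons.mpr ⟨rfl, by rw [← G_succ]; exact ih (!s)⟩

lemma G_ne_nil (s : Bool) (n : ℕ) (hn : n ≠ 0) : G s n ≠ [] := by
  cases n with
  | zero => exact absurd rfl hn
  | succ m => simp [G_succ]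

lemma F_eq_G (s : Bool) (l rr : ℕ) (hrr : rr ≤ 1) :
    (List.replicate l [s, !s]).flatten ++ List.replicate rr s = G s (2*l+rr) := by
  induction l generalizing s with
  | zero =>
    interval_cases rr <;> simp [G, G_succ]
  | succ n ih =>
    have h1 : (List.replicate (n+1) [s, !s]).flatten ++ List.replicate rr s
        = s :: ((!s) :: ((List.replicate n [s, !s]).flatten ++ List.replicate rr s)) := by
      simp [List.replicate_succ]
    rw [h1, ih s]
    have h2 : 2*(n+1)+rr = (2*n+rr) + 1 + 1 := by ring
    rw [h2, G_succ, G_succ, Bool.not_not]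

lemma chain_eq_G : ∀ B : List Bool, List.Chain' (fun x y => y = !x) B →
    ∀ a, B.head? = some a → B = G a B.length := by
  intro B
  induction B with
  | nil => intro _ a ha; simp at ha
  | cons x t ih =>
    intro hch a ha
    simp at ha
    subst ha
    cases t with
    | nil => simp [G, G_succ]
    | cons y t' =>
      obtain ⟨hxy, hch'⟩ := List.isChain_cons_cons.mp hch
      subst hxy
      have ht := ih hch' (!x) (by simp)
      rw [List.length_cons, G_succ, ← ht]

lemma form_iff (B : List Bool) :
    (∃ (s : Bool) (l rr : ℕ), rr ≤ 1 ∧ (l, rr) ≠ (0, 0) ∧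
      B = (List.replicate l [s, !s]).flatten ++ List.replicate rr s)
    ↔ B ≠ [] ∧ List.Chain' (fun x y => y = !x) B := by
  constructor
  · rintro ⟨s, l, rr, hrr, hne, rfl⟩
    rw [F_eq_G s l rr hrr]
    have hlr : l ≠ 0 ∨ rr ≠ 0 := by
      by_contra h
      push_neg at h
      exact hne (by simp [h.1, h.2])
    exact ⟨G_ne_nil s _ (by omega), G_chain s _⟩
  · rintro ⟨hne, hch⟩
    cases B with
    | nil => exact absurd rfl hne
    | cons a t =>
      refine ⟨a, (t.length+1)/2, (t.length+1)%2, by omega, ?_, ?_⟩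
      · intro h
        rw [Prod.mk.injEq] at h
        omega
      · rw [F_eq_G _ _ _ (by omega)]
        have h : 2*((t.length+1)/2) + (t.length+1)%2 = t.length + 1 := by omega
        rw [h]
        have := chain_eq_G (a :: t) hch a (by simp)
        simpa using this

lemma aux : ∀ V : List Bool, V ≠ [] →
    ∃! p : List Bool × List Bool,
      V = p.1 ++ p.2 ∧ (p.1 ≠ [] → p.1.getLast? = p.2.head?) ∧
      p.2 ≠ [] ∧ List.Chain' (fun x y => y = !x) p.2 := by
  intro V
  induction V with
  | nil => intro h; exact absurd rfl h
  | cons a V' ih =>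
    intro _
    cases V' with
    | nil =>
      refine ⟨([], [a]), ⟨rfl, by simp, by simp, List.isChain_singleton a⟩, ?_⟩
      rintro ⟨A, B⟩ ⟨hV, _, hBne, _⟩
      cases A with
      | nil =>
        simp only [List.nil_append] at hV
        simp [← hV]
      | cons c A'' =>
        exfalso
        simp only [List.cons_append, List.cons.injEq] at hV
        have h2 := hV.2
        have : A'' ++ B = [] := h2.symm
        rw [List.append_eq_nil_iff] at this
        exact hBne this.2
    | cons b t =>
      obtain ⟨⟨A', B'⟩, ⟨hV', hi', hB'ne, hch'⟩, huniq⟩ := ih (by simp)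
      simp only at hV' hi' hB'ne hch'
      by_cases hA' : A' = []
      · subst hA'
        simp only [List.nil_append] at hV'
        -- B' = b :: t
        by_cases hb : b = !a
        · -- whole word alternates
          refine ⟨([], a :: B'), ⟨by simp [hV'], by simp, by simp, ?_⟩, ?_⟩
          · show List.Chain' (fun x y => y = !x) (a :: B')
            rw [← hV']
            exact List.isChain_cons_cons.mpr ⟨hb, hV' ▸ hch'⟩
          · rintro ⟨A, B⟩ ⟨hV, hi, hBne, hch⟩
            simp only at hV hi hBne hch
            cases A with
            | nil =>
              simp only [List.nil_append] at hV
              simp [← hV, hV']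
            | cons c A'' =>
              simp only [List.cons_append, List.cons.injEq] at hV
              obtain ⟨hc, hV2⟩ := hV
              have hcond : b :: t = A'' ++ B ∧ (A'' ≠ [] → A''.getLast? = B.head?) ∧
                  B ≠ [] ∧ List.Chain' (fun x y => y = !x) B := by
                refine ⟨hV2, ?_, hBne, hch⟩
                intro hA''
                have h3 : (c :: A'').getLast? = A''.getLast? := by
                  cases A'' with
                  | nil => exact absurd rfl hA''
                  | cons d A3 => simp [List.getLast?_cons_cons]
                rw [← h3]
                exact hi (by simp)
              have heq := huniq (A'', B) hcond
              rw [Prod.mk.injEq] at heq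
              obtain ⟨hA2, hB2⟩ := heq
              subst hA2
              exfalso
              have hhead : B.head? = some b := by rw [hB2, ← hV']; rfl
              have hcb := hi (by simp)
              simp only [List.getLast?_singleton, hhead, Option.some.injEq] at hcb
              subst hc
              rw [hb] at hcb
              simp at hcb
        · -- b = a : break at first position
          have hba : b = a := by
            cases a <;> cases b <;> simp_all
          refine ⟨([a], B'), ⟨by simp [hV'], ?_, hB'ne, hch'⟩, ?_⟩
          · intro _
            show [a].getLast? = B'.head?
            rw [← hV', hba]
            simp
          · rintro ⟨A, B⟩ ⟨hV, hi, hBne, hch⟩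
            simp only at hV hi hBne hch
            cases A with
            | nil =>
              exfalso
              simp only [List.nil_append] at hV
              rw [← hV] at hch
              have := (List.isChain_cons_cons.mp hch).1
              exact hb this
            | cons c A'' =>
              simp only [List.cons_append, List.cons.injEq] at hV
              obtain ⟨hc, hV2⟩ := hV
              have hcond : b :: t = A'' ++ B ∧ (A'' ≠ [] → A''.getLast? = B.head?) ∧
                  B ≠ [] ∧ List.Chain' (fun x y => y = !x) B := by
                refine ⟨hV2, ?_, hBne, hch⟩
                intro hA''
                have h3 : (c :: A'').getLast? = A''.getLast? := by
                  cases A'' with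
                  | nil => exact absurd rfl hA''
                  | cons d A3 => simp [List.getLast?_cons_cons]
                rw [← h3]
                exact hi (by simp)
              have heq := huniq (A'', B) hcond
              rw [Prod.mk.injEq] at heq
              obtain ⟨hA2, hB2⟩ := heq
              subst hc
              simp [hA2, hB2]
      · -- A' nonempty: extend A'
        refine ⟨(a :: A', B'), ⟨by simp [hV'], ?_, hB'ne, hch'⟩, ?_⟩
        · intro _
          show (a :: A').getLast? = B'.head?
          have h3 : (a :: A').getLast? = A'.getLast? := by
            cases A' with
            | nil => exact absurd rfl hA'
            | cons d A3 => simp [List.getLast?_cons_cons]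
          rw [h3]
          exact hi' hA'
        · rintro ⟨A, B⟩ ⟨hV, hi, hBne, hch⟩
          simp only at hV hi hBne hch
          cases A with
          | nil =>
            exfalso
            simp only [List.nil_append] at hV
            rw [← hV] at hch
            have hchV' : List.Chain' (fun x y => y = !x) (b :: t) := (List.isChain_cons_cons.mp hch).2
            rw [hV'] at hchV'
            replace hchV' := List.isChain_append.mp hchV'
            obtain ⟨_, _, hrel⟩ := hchV'
            obtain ⟨d, hd⟩ : ∃ d, B'.head? = some d := by
              cases B' with
              | nil => exact absurd rfl hB'ne
              | cons e B2 => exact ⟨e, rfl⟩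
            have hlast := hi' hA'
            have := hrel d (by rw [hlast]; exact hd) d hd
            simp at this
          | cons c A'' =>
            simp only [List.cons_append, List.cons.injEq] at hV
            obtain ⟨hc, hV2⟩ := hV
            have hcond : b :: t = A'' ++ B ∧ (A'' ≠ [] → A''.getLast? = B.head?) ∧
                B ≠ [] ∧ List.Chain' (fun x y => y = !x) B := by
              refine ⟨hV2, ?_, hBne, hch⟩
              intro hA''
              have h3 : (c :: A'').getLast? = A''.getLast? := by
                cases A'' with
                | nil => exact absurd rfl hA''
                | cons d A3 => simp [List.getLast?_cons_cons]
              rw [← h3]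
              exact hi (by simp)
            have heq := huniq (A'', B) hcond
            rw [Prod.mk.injEq] at heq
            obtain ⟨hA2, hB2⟩ := heq
            subst hc
            simp [hA2, hB2]

end PatternDecomp

/-- every nonempty pattern `V` (a word over the two symbols
`*` = `true` and `*⁻¹` = `false`) has a unique decomposition `V = V_I V_II`
such that (i) if `V_I` is nonempty then its last letter equals the first
letter of `V_II`, and (ii) `V_II` has the form `(s s̄)^l s^r` for some symbol
`s`, `l ≥ 0` and `r ∈ {0,1}` with `(l,r) ≠ (0,0)`. -/
theorem pattern_unique_decomposition :
    ∀ V : List Bool, V ≠ [] →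
      ∃! p : List Bool × List Bool,
        V = p.1 ++ p.2 ∧
        (p.1 ≠ [] → p.1.getLast? = p.2.head?) ∧
        ∃ (s : Bool) (l rr : ℕ), rr ≤ 1 ∧ (l, rr) ≠ (0, 0) ∧
          p.2 = (List.replicate l [s, !s]).flatten ++ List.replicate rr s := by
  intro V hV
  obtain ⟨p, hp, hu⟩ := PatternDecomp.aux V hV
  refine ⟨p, ⟨hp.1, hp.2.1, (PatternDecomp.form_iff p.2).mpr ⟨hp.2.2.1, hp.2.2.2⟩⟩, ?_⟩
  rintro q ⟨h1, h2, h3⟩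
  obtain ⟨hq1, hq2⟩ := (PatternDecomp.form_iff q.2).mp h3
  exact hu q ⟨h1, h2, hq1, hq2⟩
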